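/- For symmetric matrices X, Y ∈ Sym(n), the infimum over R ∈ O(n) of the Frobenius norm ‖R Y Rᵀ − X‖_F equals the ℓ² distance between the sorted eigenvalue vectors of X and Y, i.e. (∑_{i=1}^n |λ_i(X) − λ_i(Y)|²)^{1/2}, where λ_1(X) ≤ ⋯ ≤ λ_n(X) and λ_1(Y) ≤ ⋯ ≤ λ_n(Y) are the eigenvalues counted with multiplicity. -/
import Mathlib

open Matrix BigOperators

noncomputable def frobNorm {n : ℕ} (A : Matrix (Fin n) (Fin n) ℝ) : ℝ :=
  Real.sqrt (∑ i, ∑ j, (A i j) ^ 2)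

def IsOrth {n : ℕ} (R : Matrix (Fin n) (Fin n) ℝ) : Prop := R * Rᵀ = 1

/-- Sorted (nondecreasing) vector of eigenvalues of a real symmetric matrix. -/
noncomputable def sortedEig {n : ℕ} (X : Matrix (Fin n) (Fin n) ℝ) : Fin n → ℝ :=
  if h : X.IsHermitian then h.eigenvalues ∘ Tuple.sort h.eigenvalues else 0

/-- ℓ² spectral distance between symmetric matrices. -/
noncomputable def specDist {n : ℕ} (X Y : Matrix (Fin n) (Fin n) ℝ) : ℝ :=
  Real.sqrt (∑ i, (sortedEig X i - sortedEig Y i) ^ 2)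

/-! ### Auxiliary lemmas -/

noncomputable def sqSum {n : ℕ} (A : Matrix (Fin n) (Fin n) ℝ) : ℝ := ∑ i, ∑ j, (A i j) ^ 2

lemma sqSum_eq_trace {n : ℕ} (A : Matrix (Fin n) (Fin n) ℝ) :
    sqSum A = trace (A * Aᵀ) := by
  simp [sqSum, trace, mul_apply, diag, sq]

lemma sqSum_conj {n : ℕ} (Q A : Matrix (Fin n) (Fin n) ℝ) (hQ : Q * Qᵀ = 1) :
    sqSum (Q * A * Qᵀ) = sqSum A := by
  have hQ' : Qᵀ * Q = 1 := mul_eq_one_comm.mp hQ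
  rw [sqSum_eq_trace, sqSum_eq_trace]
  have : (Q * A * Qᵀ) * (Q * A * Qᵀ)ᵀ = Q * (A * Aᵀ) * Qᵀ := by
    simp only [transpose_mul, transpose_transpose]
    calc Q * A * Qᵀ * (Q * (Aᵀ * Qᵀ)) = Q * A * (Qᵀ * Q) * (Aᵀ * Qᵀ) := by
          noncomm_ring
      _ = Q * (A * Aᵀ) * Qᵀ := by rw [hQ']; noncomm_ring
  rw [this, trace_mul_cycle, ← mul_assoc, hQ', one_mul]

lemma sqSum_diagonal {n : ℕ} (v : Fin n → ℝ) :
    sqSum (diagonal v) = ∑ i, (v i) ^ 2 := by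
  simp [sqSum, diagonal_apply, ite_pow]

lemma conj_diag_apply {n : ℕ} (M : Matrix (Fin n) (Fin n) ℝ) (v : Fin n → ℝ) (i j : Fin n) :
    (M * diagonal v * Mᵀ) i j = ∑ k, M i k * v k * M j k := by
  rw [mul_apply]
  simp only [mul_diagonal, transpose_apply]

lemma sortedEig_monotone {n : ℕ} {X : Matrix (Fin n) (Fin n) ℝ} (h : X.IsHermitian) :
    Monotone (sortedEig X) := by
  rw [sortedEig, dif_pos h]
  exact Tuple.monotone_sort h.eigenvalues

lemma sorted_spectral {n : ℕ} {X : Matrix (Fin n) (Fin n) ℝ} (h : X.IsHermitian) :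
    ∃ U : Matrix (Fin n) (Fin n) ℝ, U * Uᵀ = 1 ∧
      X = U * diagonal (sortedEig X) * Uᵀ := by
  set U₀ : Matrix (Fin n) (Fin n) ℝ := (h.eigenvectorUnitary : Matrix (Fin n) (Fin n) ℝ) with hU₀def
  have hU₀ : U₀ * U₀ᵀ = 1 := by
    have := (Matrix.mem_unitaryGroup_iff).mp h.eigenvectorUnitary.2
    simpa [Matrix.star_eq_conjTranspose, conjTranspose_eq_transpose_of_trivial] using this
  have hspec : X = U₀ * diagonal h.eigenvalues * U₀ᵀ := by
    have := h.spectral_theorem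
    simpa [Matrix.star_eq_conjTranspose, conjTranspose_eq_transpose_of_trivial] using this
  set σ := Tuple.sort h.eigenvalues with hσ
  refine ⟨U₀.submatrix id σ, ?_, ?_⟩
  · ext i j
    rw [← hU₀]
    simp only [mul_apply, transpose_apply, submatrix_apply, id]
    exact Fintype.sum_equiv σ _ _ (fun k => rfl)
  · rw [sortedEig, dif_pos h]
    ext i j
    rw [conj_diag_apply]
    conv_lhs => rw [hspec]
    rw [conj_diag_apply]
    exact (Fintype.sum_equiv σ (fun k => U₀.submatrix id σ i k * (h.eigenvalues ∘ σ) k *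
      U₀.submatrix id σ j k) (fun k => U₀ i k * h.eigenvalues k * U₀ j k) (fun k => rfl)).symm

lemma ds_bound {n : ℕ} {a b : Fin n → ℝ} (ha : Monotone a) (hb : Monotone b)
    {S : Matrix (Fin n) (Fin n) ℝ} (hS : S ∈ doublyStochastic ℝ (Fin n)) :
    ∑ i, ∑ j, S i j * (a i * b j) ≤ ∑ i, a i * b i := by
  have hS' : S ∈ convexHull ℝ {M : Matrix (Fin n) (Fin n) ℝ |
      ∃ σ : Equiv.Perm (Fin n), σ.permMatrix ℝ = M} := by
    rw [← doublyStochastic_eq_convexHull_permMatrix]; exact hS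
  have hlin : IsLinearMap ℝ
      (fun M : Matrix (Fin n) (Fin n) ℝ => ∑ i, ∑ j, M i j * (a i * b j)) := by
    constructor
    · intro M N
      simp [Matrix.add_apply, add_mul, Finset.sum_add_distrib]
    · intro c M
      simp [Matrix.smul_apply, smul_eq_mul, Finset.mul_sum, mul_assoc]
  have hsub : {M | ∃ σ : Equiv.Perm (Fin n), σ.permMatrix ℝ = M} ⊆
      {M : Matrix (Fin n) (Fin n) ℝ | ∑ i, ∑ j, M i j * (a i * b j) ≤ ∑ i, a i * b i} := by
    rintro M ⟨σ, rfl⟩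
    have hentry : ∀ i, ∑ j, (σ.permMatrix ℝ) i j * (a i * b j) = a i * b (σ i) := by
      intro i
      rw [Finset.sum_eq_single (σ i)]
      · simp [Equiv.Perm.permMatrix, PEquiv.toMatrix_apply, Equiv.toPEquiv_apply]
      · intro j _ hj
        simp [Equiv.Perm.permMatrix, PEquiv.toMatrix_apply, Equiv.toPEquiv_apply, Ne.symm hj]
      · simp
    simp only [Set.mem_setOf_eq, hentry]
    simpa using (ha.monovary hb).sum_smul_comp_perm_le_sum_smul (σ := σ)
  exact convexHull_min hsub (convex_halfSpace_le hlin _) hS'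

lemma orth_sq_ds {n : ℕ} {W : Matrix (Fin n) (Fin n) ℝ} (hW : W * Wᵀ = 1) :
    (Matrix.of fun i j => (W i j) ^ 2) ∈ doublyStochastic ℝ (Fin n) := by
  have hW' : Wᵀ * W = 1 := mul_eq_one_comm.mp hW
  rw [mem_doublyStochastic_iff_sum]
  refine ⟨fun i j => sq_nonneg _, fun i => ?_, fun j => ?_⟩
  · have := congrFun (congrFun hW i) i
    simpa [mul_apply, sq, Matrix.one_apply] using this
  · have := congrFun (congrFun hW' j) j
    simpa [mul_apply, sq, Matrix.one_apply] using this

lemma sqSum_lower {n : ℕ} {X Y : Matrix (Fin n) (Fin n) ℝ}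
    (hX : X.IsHermitian) (hY : Y.IsHermitian)
    {R : Matrix (Fin n) (Fin n) ℝ} (hR : R * Rᵀ = 1) :
    ∑ i, (sortedEig X i - sortedEig Y i) ^ 2 ≤ sqSum (R * Y * Rᵀ - X) := by
  obtain ⟨U, hU, hXU⟩ := sorted_spectral hX
  obtain ⟨V, hV, hYV⟩ := sorted_spectral hY
  set lam := sortedEig X with hlam
  set mu := sortedEig Y with hmu
  have hUc : Uᵀ * U = 1 := mul_eq_one_comm.mp hU
  have hVc : Vᵀ * V = 1 := mul_eq_one_comm.mp hV
  set W := Uᵀ * R * V with hWdef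
  have hW : W * Wᵀ = 1 := by
    have h1 : W * Wᵀ = Uᵀ * R * (V * Vᵀ) * (Rᵀ * U) := by
      simp [hWdef, transpose_mul, Matrix.mul_assoc]
    rw [h1, hV, mul_one]
    have h2 : Uᵀ * R * (Rᵀ * U) = Uᵀ * (R * Rᵀ) * U := by simp [Matrix.mul_assoc]
    rw [h2, hR, mul_one, hUc]
  have hUW : U * W = R * V := by
    simp [hWdef, ← Matrix.mul_assoc, hU]
  have key : R * Y * Rᵀ - X = U * (W * diagonal mu * Wᵀ - diagonal lam) * Uᵀ := by
    rw [Matrix.mul_sub, Matrix.sub_mul, ← hXU]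
    congr 1
    have h3 : U * (W * diagonal mu * Wᵀ) * Uᵀ = (U * W) * diagonal mu * (U * W)ᵀ := by
      simp [transpose_mul, Matrix.mul_assoc]
    rw [h3, hUW, hYV]
    simp [transpose_mul, Matrix.mul_assoc]
  rw [key, sqSum_conj _ _ hU]
  set M := W * diagonal mu * Wᵀ with hM
  have hsplit : sqSum (M - diagonal lam)
      = sqSum M - 2 * (∑ i, ∑ j, M i j * diagonal lam i j) + sqSum (diagonal lam) := by
    have h4 : ∀ i j, ((M - diagonal lam) i j) ^ 2
        = (M i j) ^ 2 - 2 * (M i j * diagonal lam i j) + (diagonal lam i j) ^ 2 := by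
      intro i j; simp only [Matrix.sub_apply]; ring
    simp only [sqSum, h4, Finset.sum_add_distrib, Finset.sum_sub_distrib, Finset.mul_sum]
  have hmid : ∑ i, ∑ j, M i j * diagonal lam i j
      = ∑ i, ∑ j, (W i j) ^ 2 * (lam i * mu j) := by
    refine Finset.sum_congr rfl fun i _ => ?_
    rw [Finset.sum_eq_single i]
    · rw [hM, conj_diag_apply, diagonal_apply_eq, Finset.sum_mul]
      exact Finset.sum_congr rfl fun j _ => by ring
    · intro j _ hj
      simp [diagonal_apply_ne' _ hj]
    · simp
  have hM2 : sqSum M = ∑ i, mu i ^ 2 := by rw [hM, sqSum_conj _ _ hW, sqSum_diagonal]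
  have hds : ∑ i, ∑ j, (W i j) ^ 2 * (lam i * mu j) ≤ ∑ i, lam i * mu i := by
    have := ds_bound (sortedEig_monotone hX) (sortedEig_monotone hY) (orth_sq_ds hW)
    simpa using this
  have hexp : ∑ i, (lam i - mu i) ^ 2
      = ∑ i, lam i ^ 2 - 2 * (∑ i, lam i * mu i) + ∑ i, mu i ^ 2 := by
    rw [Finset.mul_sum, ← Finset.sum_sub_distrib, ← Finset.sum_add_distrib]
    exact Finset.sum_congr rfl fun i _ => by ring
  rw [hsplit, hmid, hM2, sqSum_diagonal, hexp]
  linarith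

theorem stmt_0 {n : ℕ} (X Y : Matrix (Fin n) (Fin n) ℝ) (hX : X.IsSymm) (hY : Y.IsSymm) :
    sInf {d : ℝ | ∃ R : Matrix (Fin n) (Fin n) ℝ, IsOrth R ∧ d = frobNorm (R * Y * Rᵀ - X)} =
      specDist X Y := by
  have hX' : X.IsHermitian := by
    rw [Matrix.IsHermitian, conjTranspose_eq_transpose_of_trivial]; exact hX
  have hY' : Y.IsHermitian := by
    rw [Matrix.IsHermitian, conjTranspose_eq_transpose_of_trivial]; exact hY
  have hfrob : ∀ A : Matrix (Fin n) (Fin n) ℝ, frobNorm A = Real.sqrt (sqSum A) := fun A => rfl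
  have hlower : ∀ R : Matrix (Fin n) (Fin n) ℝ, IsOrth R →
      specDist X Y ≤ frobNorm (R * Y * Rᵀ - X) := by
    intro R hR
    rw [hfrob, specDist]
    exact Real.sqrt_le_sqrt (sqSum_lower hX' hY' hR)
  have hbdd : BddBelow {d : ℝ | ∃ R : Matrix (Fin n) (Fin n) ℝ,
      IsOrth R ∧ d = frobNorm (R * Y * Rᵀ - X)} := by
    refine ⟨specDist X Y, ?_⟩
    rintro d ⟨R, hR, rfl⟩
    exact hlower R hR
  have hmem : specDist X Y ∈ {d : ℝ | ∃ R : Matrix (Fin n) (Fin n) ℝ,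
      IsOrth R ∧ d = frobNorm (R * Y * Rᵀ - X)} := by
    obtain ⟨U, hU, hXU⟩ := sorted_spectral hX'
    obtain ⟨V, hV, hYV⟩ := sorted_spectral hY'
    set lam := sortedEig X with hlamdef
    set mu := sortedEig Y with hmudef
    have hUc : Uᵀ * U = 1 := mul_eq_one_comm.mp hU
    have hVc : Vᵀ * V = 1 := mul_eq_one_comm.mp hV
    refine ⟨U * Vᵀ, ?_, ?_⟩
    · show (U * Vᵀ) * (U * Vᵀ)ᵀ = 1
      have : (U * Vᵀ) * (U * Vᵀ)ᵀ = U * (Vᵀ * V) * Uᵀ := by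
        simp [transpose_mul, Matrix.mul_assoc]
      rw [this, hVc, mul_one, hU]
    · have hconj : (U * Vᵀ) * Y * (U * Vᵀ)ᵀ = U * diagonal mu * Uᵀ := by
        rw [hYV]
        have : (U * Vᵀ) * (V * diagonal (mu) * Vᵀ) * (U * Vᵀ)ᵀ
            = U * ((Vᵀ * V) * diagonal (mu) * (Vᵀ * V)) * Uᵀ := by
          simp [transpose_mul, Matrix.mul_assoc]
        rw [this, hVc, one_mul, mul_one]
      have hdiff : (U * Vᵀ) * Y * (U * Vᵀ)ᵀ - X
          = U * diagonal (fun i => mu i - lam i) * Uᵀ := by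
        rw [hconj, hXU, ← Matrix.sub_mul, ← Matrix.mul_sub]
        congr 2
        rw [← diagonal_sub]
      rw [hdiff, hfrob, sqSum_conj _ _ hU, sqSum_diagonal]
      unfold specDist
      rw [← hlamdef, ← hmudef]
      congr 1
      exact Finset.sum_congr rfl fun i _ => by ring
  refine le_antisymm (csInf_le hbdd hmem) (le_csInf ⟨_, ⟨1, ?_, rfl⟩⟩ ?_)
  · show (1 : Matrix (Fin n) (Fin n) ℝ) * 1ᵀ = 1
    simp
  · rintro d ⟨R, hR, rfl⟩
    exact hlower R hR
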